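/- Let H be an infinite-dimensional separable real Hilbert space and 𝒳 = {x ∈ H : ‖x‖ ≤ 1} its closed unit ball. For an integer n ≥ 2 let ℱ = {x ↦ (1 + ⟨w, x⟩)/2 : w ∈ H, ‖w‖ ≤ 1} and ℱ_{1/n} = {x ↦ (1 + ⟨w, x⟩)/2 : w ∈ H, ‖w‖ ≤ 1 − 1/n}, both subsets of [0,1]^𝒳. Then the minimax regrets satisfy ℛ_n(ℱ) ≤ ℛ_n(ℱ_{1/n}) + 2. -/

import Mathlib

open scoped ENNReal

/-- Logarithmic loss ℓ(p, y) = −y log p − (1−y) log(1−p) ∈ [0,∞], for p ∈ [0,1] and y ∈ {0,1}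
(encoded as `Bool`); the loss is +∞ when the predicted probability of the realized outcome
vanishes. -/
noncomputable def logLoss (p : ℝ) (y : Bool) : ℝ≥0∞ :=
  if (if y then p else 1 - p) ≤ 0 then ⊤
  else ENNReal.ofReal (- Real.log (if y then p else 1 - p))

/-- The n-round alternated value sup_{x_t ∈ X} inf_{p̂_t ∈ [0,1]} sup_{y_t ∈ {0,1}} of a payoff
depending on the sequences (x_1,…,x_n), (p̂_1,…,p̂_n), (y_1,…,y_n). -/
noncomputable def gameVal {X : Type*} :
    (n : ℕ) → ((Fin n → X) → (Fin n → ℝ) → (Fin n → Bool) → EReal) → EReal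
  | 0, payoff => payoff Fin.elim0 Fin.elim0 Fin.elim0
  | n + 1, payoff =>
      ⨆ x : X, ⨅ p : Set.Icc (0 : ℝ) 1, ⨆ y : Bool,
        gameVal n fun xs ps ys => payoff (Fin.cons x xs) (Fin.cons (p : ℝ) ps) (Fin.cons y ys)

/-- Minimax regret ℛ_n(ℱ) of sequential probability assignment with side information:
the alternated value of Σ_t ℓ(p̂_t, y_t) − inf_{f∈ℱ} Σ_t ℓ(f(x_t), y_t), in the extended
reals. -/
noncomputable def minimaxRegret {X : Type*} (n : ℕ) (F : Set (X → ℝ)) : EReal :=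
  gameVal n fun xs ps ys =>
    ((∑ t, logLoss (ps t) (ys t) : ℝ≥0∞) : EReal)
      - ((⨅ f ∈ F, ∑ t, logLoss (f (xs t)) (ys t) : ℝ≥0∞) : EReal)




lemma ereal_iSup_add_le {ι : Sort*} (h : ι → EReal) (c : ℝ) :
    (⨆ i, (h i + (c : EReal))) ≤ (⨆ i, h i) + (c : EReal) :=
  iSup_le fun i => add_le_add_left (le_iSup h i) _

lemma ereal_iInf_add_le {ι : Sort*} (h : ι → EReal) (c : ℝ) :
    (⨅ i, (h i + (c : EReal))) ≤ (⨅ i, h i) + (c : EReal) := by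
  rw [← EReal.sub_le_iff_le_add (.inl (EReal.coe_ne_bot c)) (.inl (EReal.coe_ne_top c))]
  exact le_iInf fun i => EReal.sub_le_of_le_add (iInf_le _ i)

lemma gameVal_mono {X : Type*} :
    ∀ (n : ℕ) (g1 g2 : (Fin n → X) → (Fin n → ℝ) → (Fin n → Bool) → EReal),
    (∀ xs ps ys, g1 xs ps ys ≤ g2 xs ps ys) → gameVal n g1 ≤ gameVal n g2
  | 0, g1, g2, h => h _ _ _
  | n + 1, g1, g2, h => by
    simp only [gameVal]
    exact iSup_mono fun x => iInf_mono fun p => iSup_mono fun y =>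
      gameVal_mono n _ _ fun xs ps ys => h _ _ _

lemma gameVal_add_const {X : Type*} :
    ∀ (n : ℕ) (g : (Fin n → X) → (Fin n → ℝ) → (Fin n → Bool) → EReal) (c : ℝ),
    gameVal n (fun xs ps ys => g xs ps ys + (c : EReal)) ≤ gameVal n g + (c : EReal)
  | 0, g, c => le_of_eq rfl
  | n + 1, g, c => by
    simp only [gameVal]
    refine le_trans (iSup_mono fun x => ?_) (ereal_iSup_add_le _ c)
    refine le_trans (iInf_mono fun p => ?_) (ereal_iInf_add_le _ c)
    refine le_trans (iSup_mono fun y => ?_) (ereal_iSup_add_le _ c)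
    exact gameVal_add_const n _ c

lemma neg_log_le (lam d q q' : ℝ) (hlam : 0 < lam) (hd : 0 ≤ d) (hq' : q' = lam * q + d)
    (hq : 0 < q) : - Real.log q' ≤ - Real.log q + (- Real.log lam) := by
  have h1 : lam * q ≤ q' := by linarith
  have h2 : Real.log (lam * q) ≤ Real.log q' := Real.log_le_log (by positivity) h1
  rw [Real.log_mul hlam.ne' hq.ne'] at h2
  linarith

lemma logLoss_scale (p : ℝ) (y : Bool) (lam d : ℝ) (hlam : 0 < lam) (hd : 0 ≤ d)
    (hd2 : 0 ≤ 1 - lam - d) :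
    logLoss (lam * p + d) y ≤ logLoss p y + ENNReal.ofReal (- Real.log lam) := by
  have key : ∀ q q' : ℝ, q' = lam * q + (if y then d else 1 - lam - d) →
      (if q' ≤ 0 then (⊤:ℝ≥0∞) else ENNReal.ofReal (- Real.log q')) ≤
      (if q ≤ 0 then (⊤:ℝ≥0∞) else ENNReal.ofReal (- Real.log q))
        + ENNReal.ofReal (- Real.log lam) := by
    intro q q' hq'
    by_cases hq : q ≤ 0
    · simp [hq, top_add]
    · push_neg at hq
      have hdy : 0 ≤ (if y then d else 1 - lam - d) := by cases y <;> simp <;> linarith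
      have hq'pos : 0 < q' := by
        rw [hq']; have : 0 < lam * q := by positivity
        linarith
      rw [if_neg (not_le.2 hq'pos), if_neg (not_le.2 hq)]
      calc ENNReal.ofReal (- Real.log q')
          ≤ ENNReal.ofReal (- Real.log q + - Real.log lam) :=
            ENNReal.ofReal_le_ofReal (neg_log_le lam _ q q' hlam hdy hq' hq)
        _ ≤ _ := ENNReal.ofReal_add_le
  cases y
  · have := key (1 - p) (1 - (lam * p + d)) (by push_cast; ring)
    simpa [logLoss] using this
  · have := key p (lam * p + d) (by simp)
    simpa [logLoss] using this

lemma nc_le_two (n : ℕ) (hn : 2 ≤ n) : (n : ℝ) * (- Real.log (1 - 1/(n:ℝ))) ≤ 2 := by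
  have hn' : (2:ℝ) ≤ (n:ℝ) := by exact_mod_cast hn
  have hx : (0:ℝ) < 1 - 1/(n:ℝ) := by
    have h1 : 1/(n:ℝ) ≤ 1/2 := by
      apply one_div_le_one_div_of_le <;> linarith
    linarith
  have h1 : Real.log (1 - 1/(n:ℝ))⁻¹ ≤ (1 - 1/(n:ℝ))⁻¹ - 1 :=
    Real.log_le_sub_one_of_pos (by positivity)
  rw [Real.log_inv] at h1
  have h2 : (n:ℝ) * (- Real.log (1 - 1/(n:ℝ))) ≤ (n:ℝ) * ((1 - 1/(n:ℝ))⁻¹ - 1) :=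
    mul_le_mul_of_nonneg_left h1 (by positivity)
  refine h2.trans ?_
  have hm1 : (0:ℝ) < (n:ℝ) - 1 := by linarith
  have h3 : (n:ℝ) * ((1 - 1/(n:ℝ))⁻¹ - 1) = (n:ℝ)/((n:ℝ)-1) := by
    rw [show (1 - 1/(n:ℝ)) = ((n:ℝ)-1)/(n:ℝ) by field_simp, inv_div]
    field_simp
    ring
  rw [h3, div_le_iff₀ hm1]
  linarith


open scoped RealInnerProductSpace in
/-- for the Hilbert-ball class ℱ (radius-1 weights) and its truncation
ℱ_{1/n} (radius 1 − 1/n) on the unit ball of an infinite-dimensional separable real Hilbert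
space, ℛ_n(ℱ) ≤ ℛ_n(ℱ_{1/n}) + 2 for every n ≥ 2. -/
theorem stmt10 {H : Type*} [NormedAddCommGroup H] [InnerProductSpace ℝ H] [CompleteSpace H]
    [TopologicalSpace.SeparableSpace H] (hinf : ¬ FiniteDimensional ℝ H)
    (n : ℕ) (hn : 2 ≤ n) :
    minimaxRegret n
        {f : {x : H // ‖x‖ ≤ 1} → ℝ |
          ∃ w : H, ‖w‖ ≤ 1 ∧ ∀ x, f x = (1 + ⟪w, (x : H)⟫) / 2} ≤
      minimaxRegret n
          {f : {x : H // ‖x‖ ≤ 1} → ℝ |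
            ∃ w : H, ‖w‖ ≤ 1 - 1 / (n : ℝ) ∧ ∀ x, f x = (1 + ⟪w, (x : H)⟫) / 2} + 2 := by
  classical
  set X := {x : H // ‖x‖ ≤ 1}
  set F : Set (X → ℝ) :=
    {f | ∃ w : H, ‖w‖ ≤ 1 ∧ ∀ x, f x = (1 + ⟪w, (x : H)⟫) / 2} with hF
  set F' : Set (X → ℝ) :=
    {f | ∃ w : H, ‖w‖ ≤ 1 - 1 / (n : ℝ) ∧ ∀ x, f x = (1 + ⟪w, (x : H)⟫) / 2} with hF'
  have hn' : (2:ℝ) ≤ (n:ℝ) := by exact_mod_cast hn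
  have hnpos : (0:ℝ) < (n:ℝ) := by linarith
  set lam : ℝ := 1 - 1/(n:ℝ) with hlamdef
  have hlam : 0 < lam := by
    have h1 : 1/(n:ℝ) ≤ 1/2 := by apply one_div_le_one_div_of_le <;> linarith
    simp only [hlamdef]; linarith
  have hd : (0:ℝ) ≤ 1/(2*(n:ℝ)) := by positivity
  have hd2 : (0:ℝ) ≤ 1 - lam - 1/(2*(n:ℝ)) := by
    simp only [hlamdef]
    rw [show 1 - (1 - 1/(n:ℝ)) - 1/(2*(n:ℝ)) = 1/(2*(n:ℝ)) by field_simp; ring]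
    positivity
  have h2cast : ((2:ℝ):EReal) = (2:EReal) := by exact_mod_cast rfl
  rw [← h2cast]
  unfold minimaxRegret
  refine le_trans (gameVal_mono n _
    (fun xs ps ys =>
      (((∑ t, logLoss (ps t) (ys t) : ℝ≥0∞) : EReal)
        - ((⨅ f ∈ F', ∑ t, logLoss (f (xs t)) (ys t) : ℝ≥0∞) : EReal)) + ((2:ℝ):EReal))
    ?_) (gameVal_add_const n _ 2)
  intro xs ps ys
  set A : ℝ≥0∞ := ∑ t, logLoss (ps t) (ys t) with hA
  set B : ℝ≥0∞ := ⨅ f ∈ F, ∑ t, logLoss (f (xs t)) (ys t) with hB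
  set B' : ℝ≥0∞ := ⨅ f ∈ F', ∑ t, logLoss (f (xs t)) (ys t) with hB'
  -- ENNReal-level bound
  have hkey : B' ≤ B + 2 := by
    rw [hB, ENNReal.iInf_add]
    simp only [ENNReal.iInf_add]
    refine le_iInf₂ fun f hf => ?_
    obtain ⟨w, hw, hfw⟩ := hf
    set f' : X → ℝ := fun x => (1 + ⟪lam • w, (x : H)⟫) / 2 with hf'def
    have hf'mem : f' ∈ F' := by
      refine ⟨lam • w, ?_, fun x => rfl⟩
      rw [norm_smul, Real.norm_eq_abs, abs_of_pos hlam]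
      calc lam * ‖w‖ ≤ lam * 1 := by
            exact mul_le_mul_of_nonneg_left hw hlam.le
        _ = 1 - 1/(n:ℝ) := by rw [mul_one]
    have hfx : ∀ x : X, f' x = lam * f x + 1/(2*(n:ℝ)) := by
      intro x
      show (1 + ⟪lam • w, (x : H)⟫) / 2 = _
      rw [hfw x, real_inner_smul_left, hlamdef]
      field_simp
      ring
    have hround : ∀ t, logLoss (f' (xs t)) (ys t) ≤
        logLoss (f (xs t)) (ys t) + ENNReal.ofReal (- Real.log lam) := by
      intro t
      rw [hfx (xs t)]
      exact logLoss_scale (f (xs t)) (ys t) lam (1/(2*(n:ℝ))) hlam hd hd2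
    have hsum : (∑ t, logLoss (f' (xs t)) (ys t)) ≤
        (∑ t, logLoss (f (xs t)) (ys t)) + 2 := by
      calc (∑ t, logLoss (f' (xs t)) (ys t))
          ≤ ∑ t, (logLoss (f (xs t)) (ys t) + ENNReal.ofReal (- Real.log lam)) :=
            Finset.sum_le_sum fun t _ => hround t
        _ = (∑ t, logLoss (f (xs t)) (ys t)) + n • ENNReal.ofReal (- Real.log lam) := by
            rw [Finset.sum_add_distrib, Finset.sum_const, Finset.card_univ, Fintype.card_fin]
        _ ≤ (∑ t, logLoss (f (xs t)) (ys t)) + 2 := by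
            refine add_le_add_right ?_ _
            rw [nsmul_eq_mul, ← ENNReal.ofReal_natCast, ← ENNReal.ofReal_mul (by positivity)]
            calc ENNReal.ofReal ((n:ℝ) * (- Real.log lam)) ≤ ENNReal.ofReal 2 :=
                  ENNReal.ofReal_le_ofReal (nc_le_two n hn)
              _ = 2 := by norm_num
    exact le_trans (iInf₂_le f' hf'mem) hsum
  -- EReal-level conclusion
  have h : (B' : EReal) ≤ (B : EReal) + ((2:ℝ):EReal) := by
    have hc := EReal.coe_ennreal_le_coe_ennreal_iff.2 hkey
    rw [EReal.coe_ennreal_add] at hc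
    convert hc using 2
    norm_cast
  have h1 : (B' : EReal) - (2:ℝ) ≤ B := EReal.sub_le_of_le_add h
  have h2 : -(B : EReal) ≤ -((B' : EReal) - (2:ℝ)) := EReal.neg_le_neg_iff.2 h1
  have h3 : -((B' : EReal) - (2:ℝ)) = -(B' : EReal) + ((2:ℝ):EReal) := by
    rw [sub_eq_add_neg, EReal.neg_add (.inl (EReal.coe_ennreal_ne_bot _))
      (.inr (by simp [← EReal.coe_neg])), sub_eq_add_neg, neg_neg]
  calc (A : EReal) - B = A + -(B : EReal) := by rw [sub_eq_add_neg]
    _ ≤ A + (-(B' : EReal) + ((2:ℝ):EReal)) := by rw [← h3]; exact add_le_add_right h2 _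
    _ = (A : EReal) - B' + ((2:ℝ):EReal) := by rw [sub_eq_add_neg, add_assoc]
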